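/- Let k ≥ 1. A polynomial f ∈ ℝ[λ₁,…,λ_k] is invariant under all permutations of the variables λ₁,…,λ_k and under all sign changes λᵢ ↦ −λᵢ if and only if f lies in the ℝ-subalgebra of ℝ[λ₁,…,λ_k] generated by the k polynomials f̃ᵢ = Σ_{j=1}^k λ_j^{2i}, i = 1,…,k. (This is the description of the Weyl group invariants of the Cartan subalgebra for so(2k+1).) -/

import Mathlib

open MvPolynomial

noncomputable def WIBsqh (k : ℕ) : MvPolynomial (Fin k) ℝ →ₐ[ℝ] MvPolynomial (Fin k) ℝ :=
  aeval (fun i => X i ^ 2)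

lemma WIBsqh_monomial (k : ℕ) (t : Fin k →₀ ℕ) (c : ℝ) :
    WIBsqh k (monomial t c) = monomial (2 • t) c := by
  rw [WIBsqh, aeval_monomial, monomial_eq, Finsupp.prod, Finsupp.prod]
  have hsupp : (2 • t).support = t.support := by
    ext j; simp [Finsupp.mem_support_iff]
  rw [hsupp, algebraMap_eq]
  have : ∀ a ∈ t.support, ((X a : MvPolynomial (Fin k) ℝ) ^ 2) ^ t a = X a ^ ((2 • t) a) := by
    intro a _
    rw [← pow_mul]
    rfl
  rw [Finset.prod_congr rfl this]

lemma WIBsqh_coeff (k : ℕ) (g : MvPolynomial (Fin k) ℝ) (t : Fin k →₀ ℕ) :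
    coeff (2 • t) (WIBsqh k g) = coeff t g := by
  induction g using MvPolynomial.induction_on' with
  | monomial u c =>
    rw [WIBsqh_monomial, coeff_monomial, coeff_monomial]
    congr 1
    simp only [eq_iff_iff]
    constructor
    · intro h; ext j
      have := DFunLike.congr_fun h j
      simp only [Finsupp.smul_apply, smul_eq_mul] at this
      omega
    · rintro rfl; rfl
  | add p q hp hq => rw [map_add, coeff_add, coeff_add, hp, hq]

lemma WIBsqh_injective (k : ℕ) : Function.Injective (WIBsqh k) := by
  intro a b hab
  ext t
  rw [← WIBsqh_coeff k a t, hab, WIBsqh_coeff]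

lemma WIBsqh_psum (k n : ℕ) :
    WIBsqh k (psum (Fin k) ℝ n) = ∑ j : Fin k, (X j : MvPolynomial (Fin k) ℝ) ^ (2 * n) := by
  rw [psum, map_sum]
  refine Finset.sum_congr rfl fun j _ => ?_
  rw [map_pow, WIBsqh, aeval_X, ← pow_mul, mul_comm]

lemma WIBsqh_rename (k : ℕ) (σ : Equiv.Perm (Fin k)) (g : MvPolynomial (Fin k) ℝ) :
    rename σ (WIBsqh k g) = WIBsqh k (rename σ g) := by
  have h : (rename (σ : Fin k → Fin k)).comp (WIBsqh k)
      = (WIBsqh k).comp (rename (σ : Fin k → Fin k)) := by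
    apply algHom_ext
    intro i
    simp [WIBsqh]
  exact DFunLike.congr_fun h g

lemma WIB_signflip_coeff (k : ℕ) (i : Fin k) (f : MvPolynomial (Fin k) ℝ) (m : Fin k →₀ ℕ) :
    coeff m (aeval (fun j : Fin k => if j = i then -(X j : MvPolynomial (Fin k) ℝ) else X j) f)
      = (-1 : ℝ) ^ (m i) * coeff m f := by
  induction f using MvPolynomial.induction_on' with
  | monomial u c =>
    rw [aeval_monomial]
    have step : (Finsupp.prod u fun j n => (if j = i then -(X j : MvPolynomial (Fin k) ℝ) else X j) ^ n)
        = ((-1 : MvPolynomial (Fin k) ℝ) ^ (u i)) * Finsupp.prod u fun j n => (X j) ^ n := by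
      rw [Finsupp.prod, Finsupp.prod]
      have : ∀ a ∈ u.support, (if a = i then -(X a : MvPolynomial (Fin k) ℝ) else X a) ^ u a
          = (if a = i then (-1 : MvPolynomial (Fin k) ℝ) ^ u a else 1) * X a ^ u a := by
        intro a _
        by_cases h : a = i
        · subst h
          rw [if_pos rfl, if_pos rfl, neg_pow]
        · rw [if_neg h, if_neg h, one_mul]
      rw [Finset.prod_congr rfl this, Finset.prod_mul_distrib]
      congr 1
      rw [Finset.prod_ite_eq' u.support i (fun a => (-1 : MvPolynomial (Fin k) ℝ) ^ u a)]
      split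
      · rfl
      · rename_i h
        rw [Finsupp.notMem_support_iff.mp h, pow_zero]
    rw [step, algebraMap_eq, mul_left_comm, ← monomial_eq]
    have hC : ((-1 : MvPolynomial (Fin k) ℝ) ^ u i) = C ((-1 : ℝ) ^ u i) := by simp
    rw [hC, coeff_C_mul, coeff_monomial]
    by_cases h : u = m
    · subst h; rw [if_pos rfl]
    · rw [if_neg h]; ring
  | add p q hp hq => rw [map_add, coeff_add, coeff_add, hp, hq]; ring

lemma WIB_newton_adjoin (k : ℕ) : ∀ n : ℕ, n ≤ k →
    esymm (Fin k) ℝ n ∈ Algebra.adjoin ℝ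
      (Set.range fun i : Fin k => psum (Fin k) ℝ ((i : ℕ) + 1)) := by
  intro n
  induction n using Nat.strong_induction_on with
  | _ n ih =>
    intro hnk
    rcases Nat.eq_zero_or_pos n with rfl | hn
    · rw [esymm_zero]; exact Subalgebra.one_mem _
    have key := mul_esymm_eq_sum (Fin k) ℝ n
    have hmem : (-1 : MvPolynomial (Fin k) ℝ) ^ (n + 1) *
        ∑ a ∈ Finset.HasAntidiagonal.antidiagonal n with a.1 < n,
          (-1) ^ a.1 * esymm (Fin k) ℝ a.1 * psum (Fin k) ℝ a.2 ∈
        Algebra.adjoin ℝ (Set.range fun i : Fin k => psum (Fin k) ℝ ((i : ℕ) + 1)) := by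
      refine Subalgebra.mul_mem _
        (Subalgebra.pow_mem _ (Subalgebra.neg_mem _ (Subalgebra.one_mem _)) _) ?_
      refine Subalgebra.sum_mem _ ?_
      intro a ha
      simp only [Finset.mem_filter, Finset.HasAntidiagonal.mem_antidiagonal] at ha
      refine Subalgebra.mul_mem _ (Subalgebra.mul_mem _
        (Subalgebra.pow_mem _ (Subalgebra.neg_mem _ (Subalgebra.one_mem _)) _)
        (ih a.1 ha.2 (le_trans (le_of_lt ha.2) hnk))) ?_
      have h2 : 1 ≤ a.2 := by omega
      have h2k : a.2 - 1 < k := by omega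
      refine Algebra.subset_adjoin ⟨⟨a.2 - 1, h2k⟩, ?_⟩
      simp only
      congr 1
      omega
    rw [← key] at hmem
    have heq : esymm (Fin k) ℝ n
        = ((n : ℝ)⁻¹) • ((n : MvPolynomial (Fin k) ℝ) * esymm (Fin k) ℝ n) := by
      have : (n : MvPolynomial (Fin k) ℝ) = C (n : ℝ) := by simp
      rw [this, ← smul_eq_C_mul, smul_smul, inv_mul_cancel₀ (by exact_mod_cast hn.ne'), one_smul]
    rw [heq]
    exact Subalgebra.smul_mem _ hmem _

theorem weyl_invariants_type_B (k : ℕ) (hk : 1 ≤ k)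
    (f : MvPolynomial (Fin k) ℝ) :
    ((∀ σ : Equiv.Perm (Fin k), MvPolynomial.rename σ f = f) ∧
     (∀ i : Fin k,
       MvPolynomial.aeval
         (fun j : Fin k => if j = i then -(X j : MvPolynomial (Fin k) ℝ) else X j) f = f))
    ↔ f ∈ Algebra.adjoin ℝ
        (Set.range fun i : Fin k =>
          ∑ j : Fin k, (X j : MvPolynomial (Fin k) ℝ) ^ (2 * ((i : ℕ) + 1))) := by
  constructor
  · rintro ⟨hperm, hsign⟩
    -- all exponents are even
    have heven : ∀ m ∈ f.support, ∀ j : Fin k, Even (m j) := by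
      intro m hm j
      by_contra hodd
      have h1 := WIB_signflip_coeff k j f m
      rw [hsign j] at h1
      have hneg : (-1 : ℝ) ^ (m j) = -1 :=
        Odd.neg_one_pow (Nat.not_even_iff_odd.mp hodd)
      rw [hneg] at h1
      exact (mem_support_iff.mp hm) (by linarith)
    -- build g with (WIBsqh k) g = f
    set g : MvPolynomial (Fin k) ℝ :=
      ∑ m ∈ f.support, monomial (m.mapRange (· / 2) (by simp)) (coeff m f) with hg
    have hsq : WIBsqh k g = f := by
      rw [hg, map_sum]
      conv_rhs => rw [← f.support_sum_monomial_coeff]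
      refine Finset.sum_congr rfl fun m hm => ?_
      rw [WIBsqh_monomial]
      have hm2 : 2 • m.mapRange (· / 2) (by simp) = m := by
        ext j
        obtain ⟨c, hc⟩ := heven m hm j
        simp only [Finsupp.smul_apply, Finsupp.mapRange_apply, smul_eq_mul]
        omega
      rw [hm2]
    -- g is symmetric
    have hgsym : MvPolynomial.IsSymmetric g := by
      intro σ
      apply WIBsqh_injective k
      rw [← WIBsqh_rename, hsq, hperm σ]
    -- g lies in adjoin of esymm
    obtain ⟨q, hq⟩ := esymmAlgHom_surjective (σ := Fin k) (n := k) ℝ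
      (by simp) ⟨g, hgsym⟩
    have hgq : g = aeval (fun i : Fin k => esymm (Fin k) ℝ ((i : ℕ) + 1)) q := by
      have := congrArg Subtype.val hq
      rw [esymmAlgHom_apply] at this
      exact this.symm
    have hgE : g ∈ Algebra.adjoin ℝ
        (Set.range fun i : Fin k => esymm (Fin k) ℝ ((i : ℕ) + 1)) := by
      rw [Algebra.adjoin_range_eq_range_aeval]
      exact ⟨q, hgq.symm⟩
    have hgP : g ∈ Algebra.adjoin ℝ
        (Set.range fun i : Fin k => psum (Fin k) ℝ ((i : ℕ) + 1)) := by
      refine Algebra.adjoin_le ?_ hgE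
      rintro _ ⟨i, rfl⟩
      exact WIB_newton_adjoin k ((i : ℕ) + 1) (by omega)
    have hmap : f ∈ (Algebra.adjoin ℝ
        (Set.range fun i : Fin k => psum (Fin k) ℝ ((i : ℕ) + 1))).map (WIBsqh k) :=
      ⟨g, hgP, hsq⟩
    rw [AlgHom.map_adjoin] at hmap
    have himg : (WIBsqh k) '' (Set.range fun i : Fin k => psum (Fin k) ℝ ((i : ℕ) + 1))
        = Set.range (fun i : Fin k =>
            ∑ j : Fin k, (X j : MvPolynomial (Fin k) ℝ) ^ (2 * ((i : ℕ) + 1))) := by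
      rw [← Set.range_comp']
      congr 1
      funext i
      exact WIBsqh_psum k ((i : ℕ) + 1)
    rwa [himg] at hmap
  · intro hf
    have fix : ∀ (ψ : MvPolynomial (Fin k) ℝ →ₐ[ℝ] MvPolynomial (Fin k) ℝ),
        (∀ i : Fin k, ψ (∑ j : Fin k, (X j : MvPolynomial (Fin k) ℝ) ^ (2 * ((i : ℕ) + 1)))
          = ∑ j : Fin k, (X j : MvPolynomial (Fin k) ℝ) ^ (2 * ((i : ℕ) + 1))) → ψ f = f := by
      intro ψ hψ
      induction hf using Algebra.adjoin_induction with
      | mem x hx => obtain ⟨i, rfl⟩ := hx; exact hψ i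
      | algebraMap r => exact ψ.commutes r
      | add x y hx hy ihx ihy => rw [map_add, ihx, ihy]
      | mul x y hx hy ihx ihy => rw [map_mul, ihx, ihy]
    constructor
    · intro σ
      refine fix (rename (σ : Fin k → Fin k)) fun i => ?_
      rw [map_sum]
      simp only [map_pow, rename_X]
      exact Equiv.sum_comp σ (fun j => (X j : MvPolynomial (Fin k) ℝ) ^ (2 * ((i : ℕ) + 1)))
    · intro i
      refine fix (aeval (fun j : Fin k =>
          if j = i then -(X j : MvPolynomial (Fin k) ℝ) else X j)) fun i' => ?_
      rw [map_sum]
      refine Finset.sum_congr rfl fun j _ => ?_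
      rw [map_pow, aeval_X]
      by_cases h : j = i
      · rw [if_pos h]
        exact Even.neg_pow ⟨(i' : ℕ) + 1, by ring⟩ _
      · rw [if_neg h]
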